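/- Let K₁, K₂ > 0, σ̄ ∈ (0,1), λ > 0, and K > 0 with e^{-√λ K} = σ̄/3. Then for all sufficiently large R, for any measurable function μ : [0,R] → [K₁,K₂] and with σ(ρ) = (R/sinh(√λ R))·(sinh(√λ ρ)/ρ), one has ∫₀ᴿ μ(ρ)(σ(ρ) - σ̄)ρ² dρ < 0. -/

import Mathlib

set_option maxHeartbeats 1000000
open Real Set Filter MeasureTheory intervalIntegral

theorem stmt_18 (K₁ K₂ σbar l K : ℝ) (hK₁ : 0 < K₁) (hK₂ : 0 < K₂)
    (hσ : σbar ∈ Set.Ioo (0:ℝ) 1) (hl : 0 < l) (hK : 0 < K)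
    (hKdef : Real.exp (-(Real.sqrt l * K)) = σbar / 3) :
    ∃ R₁ : ℝ, ∀ R ≥ R₁, ∀ μ : ℝ → ℝ, Measurable μ →
      (∀ ρ ∈ Set.Icc (0:ℝ) R, K₁ ≤ μ ρ ∧ μ ρ ≤ K₂) →
      (∫ ρ in (0:ℝ)..R,
        μ ρ * ((R / Real.sinh (Real.sqrt l * R)) * (Real.sinh (Real.sqrt l * ρ) / ρ) - σbar)
          * ρ ^ 2) < 0 := by
  obtain ⟨hσ0, hσ1⟩ := hσ
  set a := Real.sqrt l with ha
  have ha0 : 0 < a := Real.sqrt_pos.mpr hl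
  refine ⟨max (max (6*K₂/(a*K₁*σbar)) (Real.log 2 / (2*a))) 1, ?_⟩
  intro R hR μ hμ hμb
  have hR1 : (1:ℝ) ≤ R := le_trans (le_max_right _ _) hR
  have hR0 : (0:ℝ) < R := lt_of_lt_of_le one_pos hR1
  have hRlog : Real.log 2 / (2*a) ≤ R :=
    le_trans (le_trans (le_max_right _ _) (le_max_left _ _)) hR
  have hRbig : 6*K₂/(a*K₁*σbar) ≤ R :=
    le_trans (le_trans (le_max_left _ _) (le_max_left _ _)) hR
  have hsinhR : 0 < Real.sinh (a*R) := (Real.sinh_pos_iff.mpr (by positivity))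
  -- sinh(aR) ≥ exp(aR)/4
  have hlog2 : Real.log 2 ≤ 2*a*R := by
    rw [div_le_iff₀ (by positivity)] at hRlog
    linarith
  have h2exp : (2:ℝ) ≤ Real.exp (2*a*R) := by
    calc (2:ℝ) = Real.exp (Real.log 2) := (Real.exp_log (by norm_num)).symm
    _ ≤ _ := Real.exp_le_exp.mpr hlog2
  have hexpsq : Real.exp (2*a*R) = Real.exp (a*R) * Real.exp (a*R) := by
    rw [← Real.exp_add]; ring_nf
  have hsinhR4 : Real.exp (a*R) / 4 ≤ Real.sinh (a*R) := by
    rw [Real.sinh_eq, Real.exp_neg]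
    have hx := Real.exp_pos (a*R)
    have hinv : (Real.exp (a*R))⁻¹ * Real.exp (a*R) = 1 := inv_mul_cancel₀ (ne_of_gt hx)
    have h1 : (Real.exp (a*R))⁻¹ ≤ Real.exp (a*R) / 2 := by
      nlinarith [hinv, hx, h2exp, hexpsq, inv_pos.mpr hx]
    linarith
  -- the pointwise upper bound function
  set g : ℝ → ℝ := fun ρ => 2*K₂*R^2 * Real.exp (a*(ρ - R)) - K₁*σbar*ρ^2 with hg
  set f : ℝ → ℝ := fun ρ =>
    μ ρ * ((R / Real.sinh (a*R)) * (Real.sinh (a*ρ) / ρ) - σbar) * ρ ^ 2 with hf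
  -- key bound : σ(ρ) ρ² ≤ 2 R² exp(a(ρ-R)) on [0,R]
  have hsig : ∀ ρ ∈ Set.Icc (0:ℝ) R,
      0 ≤ (R / Real.sinh (a*R)) * (Real.sinh (a*ρ) / ρ) ∧
      (R / Real.sinh (a*R)) * (Real.sinh (a*ρ) / ρ) * ρ^2 ≤ 2*R^2 * Real.exp (a*(ρ - R)) := by
    rintro ρ ⟨hρ0, hρR⟩
    rcases eq_or_lt_of_le hρ0 with h0 | h0
    · subst h0
      constructor
      · simp
      · norm_num
        positivity
    · have hsρ : 0 < Real.sinh (a*ρ) := (Real.sinh_pos_iff.mpr (by positivity))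
      constructor
      · positivity
      · have h1 : Real.sinh (a*ρ) ≤ Real.exp (a*ρ) / 2 := by
          rw [Real.sinh_eq]
          have := Real.exp_pos (-(a*ρ))
          linarith
        have key : R * ρ * Real.sinh (a*ρ) ≤ 2*R^2 * Real.exp (a*(ρ-R)) * Real.sinh (a*R) := by
          have h3 : R * ρ * Real.sinh (a*ρ) ≤ R * R * (Real.exp (a*ρ)/2) := by
            apply mul_le_mul
            · nlinarith
            · exact h1
            · linarith
            · positivity
          have h4 : R * R * (Real.exp (a*ρ)/2) ≤ 2*R^2 * Real.exp (a*(ρ-R)) * (Real.exp (a*R)/4) := by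
            have : Real.exp (a*(ρ-R)) * Real.exp (a*R) = Real.exp (a*ρ) := by
              rw [← Real.exp_add]; ring_nf
            nlinarith [Real.exp_pos (a*ρ)]
          calc R * ρ * Real.sinh (a*ρ) ≤ 2*R^2 * Real.exp (a*(ρ-R)) * (Real.exp (a*R)/4) :=
                le_trans h3 h4
          _ ≤ _ := by
              apply mul_le_mul_of_nonneg_left hsinhR4
              positivity
        rw [div_mul_div_comm, div_mul_eq_mul_div, div_le_iff₀ (by positivity)]
        have hmul := mul_le_mul_of_nonneg_right key (le_of_lt h0)
        nlinarith [hmul]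
  -- pointwise inequality f ≤ g on [0,R]
  have hfg : ∀ ρ ∈ Set.Icc (0:ℝ) R, f ρ ≤ g ρ := by
    intro ρ hρ
    obtain ⟨hs0, hs2⟩ := hsig ρ hρ
    obtain ⟨hμ1, hμ2⟩ := hμb ρ hρ
    set s := (R / Real.sinh (a*R)) * (Real.sinh (a*ρ) / ρ) with hs
    have hρsq : (0:ℝ) ≤ ρ^2 := sq_nonneg ρ
    have h1 : μ ρ * (s - σbar) * ρ^2 ≤ (K₂ * s - K₁ * σbar) * ρ^2 := by
      apply mul_le_mul_of_nonneg_right _ hρsq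
      have h1a : μ ρ * s ≤ K₂ * s := mul_le_mul_of_nonneg_right hμ2 hs0
      have h1b : K₁ * σbar ≤ μ ρ * σbar := mul_le_mul_of_nonneg_right hμ1 (le_of_lt hσ0)
      rw [mul_sub]
      linarith
    have h2 : (K₂ * s - K₁ * σbar) * ρ^2 ≤ 2*K₂*R^2 * Real.exp (a*(ρ - R)) - K₁*σbar*ρ^2 := by
      have h2a : K₂ * (s * ρ^2) ≤ K₂ * (2*R^2 * Real.exp (a*(ρ-R))) :=
        mul_le_mul_of_nonneg_left hs2 (le_of_lt hK₂)
      have h2b : (K₂ * s - K₁ * σbar) * ρ^2 = K₂ * (s * ρ^2) - K₁*σbar*ρ^2 := by ring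
      have h2c : 2*K₂*R^2 * Real.exp (a*(ρ - R)) = K₂ * (2*R^2 * Real.exp (a*(ρ-R))) := by ring
      rw [h2b, h2c]
      linarith
    calc f ρ = μ ρ * (s - σbar) * ρ^2 := rfl
    _ ≤ _ := le_trans h1 h2
  -- integrability of f
  have hfmeas : Measurable f := by
    apply Measurable.mul
    apply Measurable.mul hμ
    apply Measurable.sub _ measurable_const
    · exact (measurable_const.mul ((Real.continuous_sinh.measurable.comp
        (measurable_const_mul a)).div measurable_id))
    · exact measurable_id.pow_const 2
  have hgcont : Continuous g := by fun_prop
  have hgint : IntervalIntegrable g volume 0 R := hgcont.intervalIntegrable _ _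
  have hfint : IntervalIntegrable f volume 0 R := by
    rw [intervalIntegrable_iff_integrableOn_Ioc_of_le (le_of_lt hR0)]
    apply MeasureTheory.Integrable.mono'
      ((integrableOn_const_iff).mpr (Or.inr measure_Ioc_lt_top) :
        IntegrableOn (fun _ => K₂*(2*R^2 + σbar*R^2)) (Set.Ioc 0 R) volume)
      (hfmeas.aestronglyMeasurable)
    · filter_upwards [MeasureTheory.ae_restrict_mem measurableSet_Ioc] with ρ hρ
      obtain ⟨hρ0, hρR⟩ := hρ
      have hmem : ρ ∈ Set.Icc (0:ℝ) R := ⟨le_of_lt hρ0, hρR⟩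
      obtain ⟨hs0, hs2⟩ := hsig ρ hmem
      obtain ⟨hμ1, hμ2⟩ := hμb ρ hmem
      set s := (R / Real.sinh (a*R)) * (Real.sinh (a*ρ) / ρ) with hs
      have hμ0 : 0 ≤ μ ρ := le_trans (le_of_lt hK₁) hμ1
      have hexp1 : Real.exp (a*(ρ - R)) ≤ 1 := by
        rw [Real.exp_le_one_iff]
        nlinarith
      have hb1 : s * ρ^2 ≤ 2*R^2 := by nlinarith
      have hρ2R : ρ^2 ≤ R^2 := by nlinarith
      have : |f ρ| ≤ μ ρ * ((s + σbar) * ρ^2) := by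
        rw [hf]
        simp only
        rw [abs_mul, abs_mul, abs_of_nonneg hμ0, abs_of_nonneg (sq_nonneg ρ), mul_assoc]
        apply mul_le_mul_of_nonneg_left _ hμ0
        apply mul_le_mul_of_nonneg_right _ (sq_nonneg ρ)
        rw [abs_sub_comm, abs_sub_le_iff]
        constructor <;> nlinarith
      calc |f ρ| ≤ μ ρ * ((s + σbar) * ρ^2) := this
      _ ≤ K₂ * ((s + σbar) * ρ^2) := by
          apply mul_le_mul_of_nonneg_right hμ2
          positivity
      _ = K₂ * (s * ρ^2 + σbar * ρ^2) := by ring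
      _ ≤ K₂*(2*R^2 + σbar*R^2) := by
          have hA : σbar*ρ^2 ≤ σbar*R^2 := mul_le_mul_of_nonneg_left hρ2R (le_of_lt hσ0)
          exact mul_le_mul_of_nonneg_left (by linarith) (le_of_lt hK₂)
  -- integral comparison
  have hcmp : (∫ ρ in (0:ℝ)..R, f ρ) ≤ ∫ ρ in (0:ℝ)..R, g ρ :=
    intervalIntegral.integral_mono_on (le_of_lt hR0) hfint hgint hfg
  -- compute ∫ g
  have hexpint : (∫ ρ in (0:ℝ)..R, Real.exp (a*(ρ - R)))
      = Real.exp (-(a*R)) * (a⁻¹ * (Real.exp (a*R) - 1)) := by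
    have h1 : ∀ ρ : ℝ, Real.exp (a*(ρ - R)) = Real.exp (-(a*R)) * Real.exp (a*ρ) := by
      intro ρ; rw [← Real.exp_add]; ring_nf
    simp only [h1]
    rw [intervalIntegral.integral_const_mul,
      intervalIntegral.integral_comp_mul_left (fun x => Real.exp x) (ne_of_gt ha0)]
    simp [integral_exp, smul_eq_mul]
  have hgval : (∫ ρ in (0:ℝ)..R, g ρ)
      = 2*K₂*R^2 * (Real.exp (-(a*R)) * (a⁻¹ * (Real.exp (a*R) - 1))) - K₁*σbar*(R^3/3) := by
    rw [hg]
    rw [intervalIntegral.integral_sub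
      ((by fun_prop : Continuous fun ρ : ℝ =>
        2*K₂*R^2 * Real.exp (a*(ρ - R))).intervalIntegrable 0 R)
      ((by fun_prop : Continuous fun ρ : ℝ => K₁*σbar*ρ^2).intervalIntegrable 0 R)]
    rw [intervalIntegral.integral_const_mul, intervalIntegral.integral_const_mul, hexpint,
      integral_pow]
    norm_num
  -- negativity of ∫ g
  have hgneg : (∫ ρ in (0:ℝ)..R, g ρ) < 0 := by
    rw [hgval]
    have h1 : Real.exp (-(a*R)) * (Real.exp (a*R) - 1) = 1 - Real.exp (-(a*R)) := by
      rw [mul_sub, ← Real.exp_add]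
      simp
    have h2 : Real.exp (-(a*R)) * (a⁻¹ * (Real.exp (a*R) - 1)) < a⁻¹ := by
      rw [show Real.exp (-(a*R)) * (a⁻¹ * (Real.exp (a*R) - 1))
          = a⁻¹ * (Real.exp (-(a*R)) * (Real.exp (a*R) - 1)) by ring, h1]
      have := Real.exp_pos (-(a*R))
      have hainv : 0 < a⁻¹ := by positivity
      nlinarith
    have h3 : 6*K₂/(a*K₁*σbar) ≤ R := hRbig
    have h4 : 6*K₂ ≤ R * (a*K₁*σbar) := by
      rw [div_le_iff₀ (by positivity)] at h3
      linarith
    have h5 : 2*K₂*R^2 * a⁻¹ ≤ K₁*σbar*(R^3/3) := by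
      have ha' : a⁻¹ * a = 1 := inv_mul_cancel₀ (ne_of_gt ha0)
      have h4R : R^2 * (6*K₂) ≤ R^2 * (R * (a*K₁*σbar)) :=
        mul_le_mul_of_nonneg_left h4 (sq_nonneg R)
      rw [← div_eq_mul_inv, div_le_iff₀ (by positivity : (0:ℝ) < a)]
      nlinarith [h4R]
    have h6 : 2*K₂*R^2 * (Real.exp (-(a*R)) * (a⁻¹ * (Real.exp (a*R) - 1)))
        < 2*K₂*R^2 * a⁻¹ := by
      apply mul_lt_mul_of_pos_left h2
      positivity
    linarith
  calc (∫ ρ in (0:ℝ)..R,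
        μ ρ * ((R / Real.sinh (a*R)) * (Real.sinh (a*ρ) / ρ) - σbar) * ρ ^ 2)
      = ∫ ρ in (0:ℝ)..R, f ρ := rfl
  _ ≤ ∫ ρ in (0:ℝ)..R, g ρ := hcmp
  _ < 0 := hgneg
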